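/- arXiv:1909.11716 — 2 statements merged into one kernel-verified Lean document; each statement's English description precedes it below -/
import Mathlib

section
/- A set of vertices {(e_i, e_j) : (i,j) ∈ S} of Δ_{n−1} × Δ_{n−1} is affinely independent if and only if the bipartite graph on {1,...,n} ⊔ {1,...,n} with edge set S is acyclic (a forest). -/
open BigOperators

/-- The vertex of Δ_{n−1} × Δ_{n−1} indexed by a pair (i,j): the point
(e_i, e_j) in ℝⁿ × ℝⁿ. -/
noncomputable def prodVertex (n : ℕ) (p : Fin n × Fin n) : (Fin n → ℝ) × (Fin n → ℝ) :=
  (Pi.single p.1 1, Pi.single p.2 1)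

/-- The bipartite graph on {1,…,n} ⊔ {1,…,n} whose edges are the pairs in S. -/
def bipartiteGraph (n : ℕ) (S : Set (Fin n × Fin n)) : SimpleGraph (Fin n ⊕ Fin n) :=
  SimpleGraph.fromRel (fun x y => ∃ i j, (i, j) ∈ S ∧ x = Sum.inl i ∧ y = Sum.inr j)

open SimpleGraph Sum Finset

namespace AffAux

variable {n : ℕ} {S : Set (Fin n × Fin n)}

lemma bg_adj {i j : Fin n} :
    (bipartiteGraph n S).Adj (Sum.inl i) (Sum.inr j) ↔ (i, j) ∈ S := by
  simp only [bipartiteGraph, SimpleGraph.fromRel_adj]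
  constructor
  · rintro ⟨-, ⟨a, b, hab, ha, hb⟩ | ⟨a, b, hab, ha, hb⟩⟩
    · obtain rfl : a = i := by simpa using ha.symm
      obtain rfl : b = j := by simpa using hb.symm
      exact hab
    · exact absurd ha (by simp)
  · intro h
    exact ⟨by simp, Or.inl ⟨i, j, h, rfl, rfl⟩⟩

lemma bg_adj_cases {x y : Fin n ⊕ Fin n} (h : (bipartiteGraph n S).Adj x y) :
    ∃ i j, (i, j) ∈ S ∧ ((x = inl i ∧ y = inr j) ∨ (x = inr j ∧ y = inl i)) := by
  rw [bipartiteGraph, SimpleGraph.fromRel_adj] at h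
  obtain ⟨-, ⟨i, j, hij, rfl, rfl⟩ | ⟨i, j, hij, rfl, rfl⟩⟩ := h
  · exact ⟨i, j, hij, Or.inl ⟨rfl, rfl⟩⟩
  · exact ⟨i, j, hij, Or.inr ⟨rfl, rfl⟩⟩

section count

variable {V : Type*} [DecidableEq V]

/-- number of occurrences of `a` in `l` -/
def cnt (l : List (V × V)) (a : V × V) : ℕ := l.countP (fun d => decide (d = a))

@[simp] lemma cnt_nil (a : V × V) : cnt ([] : List (V × V)) a = 0 := rfl

lemma cnt_cons (d : V × V) (l : List (V × V)) (a : V × V) :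
    cnt (d :: l) a = cnt l a + (if d = a then 1 else 0) := by
  simp [cnt, List.countP_cons]

lemma cnt_pos_of_mem {l : List (V × V)} {a : V × V} (h : a ∈ l) : 0 < cnt l a :=
  List.countP_pos_iff.mpr ⟨a, h, by simp⟩

lemma cnt_eq_zero_of_not_mem {l : List (V × V)} {a : V × V} (h : a ∉ l) : cnt l a = 0 :=
  List.countP_eq_zero.mpr fun d hd => by
    simp only [decide_eq_true_eq]
    rintro rfl; exact h hd

/-- number of darts leaving `x` -/
def outC (l : List (V × V)) (x : V) : ℕ := l.countP (fun d => decide (x = d.1))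

/-- number of darts entering `x` -/
def inC (l : List (V × V)) (x : V) : ℕ := l.countP (fun d => decide (x = d.2))

lemma balance {G : SimpleGraph V} :
    ∀ {u v : V} (p : G.Walk u v) (x : V),
      outC (p.darts.map SimpleGraph.Dart.toProd) x + (if x = v then 1 else 0)
        = inC (p.darts.map SimpleGraph.Dart.toProd) x + (if x = u then 1 else 0)
  | _, _, Walk.nil, x => by simp [outC, inC]
  | _, _, Walk.cons h p, x => by
    have ih := balance p x
    simp only [Walk.darts_cons, List.map_cons, outC, inC, List.countP_cons,
      decide_eq_true_eq] at ih ⊢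
    split_ifs at ih ⊢ <;> omega

lemma count_grouping_fst {α : Type*} [Fintype α] [DecidableEq α] (g : α → V) (hg : Function.Injective g) (x : V) :
    ∀ (l : List (V × V)), (∀ d ∈ l, d.1 = x → ∃ a, d.2 = g a) →
      outC l x = ∑ a : α, cnt l (x, g a)
  | [], _ => by simp [outC]
  | d :: l, hl => by
    have ih := count_grouping_fst g hg x l (fun e he h => hl e (List.mem_cons_of_mem _ he) h)
    simp only [outC, List.countP_cons, decide_eq_true_eq] at ih ⊢
    simp only [cnt_cons]
    rw [Finset.sum_add_distrib, ← ih]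
    congr 1
    by_cases hd : x = d.1
    · obtain ⟨a₀, ha₀⟩ := hl d (List.mem_cons_self) hd.symm
      have hd' : d = (x, g a₀) := Prod.ext hd.symm ha₀
      subst hd'
      rw [if_pos hd]
      have key : ∀ a : α, (if ((x, g a₀) : V × V) = (x, g a) then (1 : ℕ) else 0)
          = if a₀ = a then 1 else 0 := fun a => by
        simp [beq_iff_eq, Prod.ext_iff, hg.eq_iff]
      rw [Finset.sum_congr rfl fun a _ => key a, Finset.sum_ite_eq]
      simp
    · rw [if_neg hd, eq_comm]
      exact Finset.sum_eq_zero fun a _ =>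
        if_neg (fun h => hd (by rw [h]))

lemma count_grouping_snd {α : Type*} [Fintype α] [DecidableEq α] (g : α → V) (hg : Function.Injective g) (x : V) :
    ∀ (l : List (V × V)), (∀ d ∈ l, d.2 = x → ∃ a, d.1 = g a) →
      inC l x = ∑ a : α, cnt l (g a, x)
  | [], _ => by simp [inC]
  | d :: l, hl => by
    have ih := count_grouping_snd g hg x l (fun e he h => hl e (List.mem_cons_of_mem _ he) h)
    simp only [inC, List.countP_cons, decide_eq_true_eq] at ih ⊢
    simp only [cnt_cons]
    rw [Finset.sum_add_distrib, ← ih]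
    congr 1
    by_cases hd : x = d.2
    · obtain ⟨a₀, ha₀⟩ := hl d (List.mem_cons_self) hd.symm
      have hd' : d = (g a₀, x) := Prod.ext ha₀ hd.symm
      subst hd'
      rw [if_pos hd]
      have key : ∀ a : α, (if ((g a₀, x) : V × V) = (g a, x) then (1 : ℕ) else 0)
          = if a₀ = a then 1 else 0 := fun a => by
        simp [beq_iff_eq, Prod.ext_iff, hg.eq_iff]
      rw [Finset.sum_congr rfl fun a _ => key a, Finset.sum_ite_eq]
      simp
    · rw [if_neg hd, eq_comm]
      exact Finset.sum_eq_zero fun a _ =>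
        if_neg (fun h => hd (by rw [h]))

end count

lemma no_rev {V : Type*} [DecidableEq V] {G : SimpleGraph V} {v : V} {c : G.Walk v v}
    (hc : c.IsCycle) {a b : V} (hab : (a, b) ∈ c.darts.map SimpleGraph.Dart.toProd) :
    (b, a) ∉ c.darts.map SimpleGraph.Dart.toProd := by
  intro hba
  obtain ⟨d₁, hd₁, hd₁'⟩ := List.mem_map.mp hab
  obtain ⟨d₂, hd₂, hd₂'⟩ := List.mem_map.mp hba
  have hnodup : (c.darts.map SimpleGraph.Dart.edge).Nodup := hc.isCircuit.isTrail.edges_nodup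
  have hedge : d₁.edge = d₂.edge := by
    unfold SimpleGraph.Dart.edge
    rw [hd₁', hd₂']
    exact Sym2.eq_swap
  have heq : d₁ = d₂ := List.inj_on_of_nodup_map hnodup hd₁ hd₂ hedge
  have hne : a ≠ b := by
    have := d₁.adj
    rw [show d₁.fst = a from congrArg Prod.fst hd₁', show d₁.snd = b from congrArg Prod.snd hd₁'] at this
    exact this.ne
  apply hne
  have : (a, b) = ((b, a) : V × V) := hd₁'.symm.trans (heq ▸ hd₂')
  exact (Prod.ext_iff.mp this).1

lemma exists_circulation (h : ¬ (bipartiteGraph n S).IsAcyclic) :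
    ∃ W : Fin n × Fin n → ℝ, W ≠ 0 ∧ (∀ q, W q ≠ 0 → q ∈ S) ∧
      (∀ i, ∑ j, W (i, j) = 0) ∧ (∀ j, ∑ i, W (i, j) = 0) := by
  unfold SimpleGraph.IsAcyclic at h
  push_neg at h
  obtain ⟨v, c, hc⟩ := h
  set L : List ((Fin n ⊕ Fin n) × (Fin n ⊕ Fin n)) := c.darts.map SimpleGraph.Dart.toProd with hL
  have hmem_adj : ∀ a b, (a, b) ∈ L → (bipartiteGraph n S).Adj a b := by
    intro a b hab
    obtain ⟨d, _, hd'⟩ := List.mem_map.mp hab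
    have := d.adj
    rwa [show d.fst = a from congrArg Prod.fst hd', show d.snd = b from congrArg Prod.snd hd'] at this
  refine ⟨fun q => (cnt L (inl q.1, inr q.2) : ℝ) - (cnt L (inr q.2, inl q.1) : ℝ),
    ?_, ?_, ?_, ?_⟩
  · -- nonzero
    have hne : c.darts ≠ [] := by
      have h3 := hc.three_le_length
      intro hnil
      rw [← SimpleGraph.Walk.length_darts, hnil] at h3
      simp at h3
    obtain ⟨d, hd⟩ := List.exists_mem_of_ne_nil _ hne
    obtain ⟨i, j, hij, hcase⟩ := bg_adj_cases d.adj
    intro hW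
    rcases hcase with ⟨h1, h2⟩ | ⟨h1, h2⟩
    · have hmem : ((inl i, inr j) : (Fin n ⊕ Fin n) × (Fin n ⊕ Fin n)) ∈ L :=
        List.mem_map.mpr ⟨d, hd, Prod.ext h1 h2⟩
      have hpos : 0 < cnt L (inl i, inr j) := cnt_pos_of_mem hmem
      have hzero : cnt L (inr j, inl i) = 0 := cnt_eq_zero_of_not_mem (no_rev hc hmem)
      have heq := congrFun hW (i, j)
      simp only [Pi.zero_apply] at heq
      have hz : (cnt L (inl i, inr j) : ℝ) = 0 := by
        simpa [hzero] using heq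
      exact hpos.ne' (by exact_mod_cast hz)
    · have hmem : ((inr j, inl i) : (Fin n ⊕ Fin n) × (Fin n ⊕ Fin n)) ∈ L :=
        List.mem_map.mpr ⟨d, hd, Prod.ext h1 h2⟩
      have hpos : 0 < cnt L (inr j, inl i) := cnt_pos_of_mem hmem
      have hzero : cnt L (inl i, inr j) = 0 := cnt_eq_zero_of_not_mem (no_rev hc hmem)
      have heq := congrFun hW (i, j)
      simp only [Pi.zero_apply] at heq
      have hz : (cnt L (inr j, inl i) : ℝ) = 0 := by
        simpa [hzero, sub_eq_zero, eq_comm] using heq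
      exact hpos.ne' (by exact_mod_cast hz)
  · -- support
    intro q hq
    by_contra hqS
    apply hq
    have h1 : cnt L (inl q.1, inr q.2) = 0 := cnt_eq_zero_of_not_mem (by
      intro hmem
      exact hqS (by
        obtain ⟨i, j, hij, hcase⟩ := bg_adj_cases (hmem_adj _ _ hmem)
        rcases hcase with ⟨ha, hb⟩ | ⟨ha, hb⟩
        · obtain rfl : q.1 = i := by simpa using ha
          obtain rfl : q.2 = j := by simpa using hb
          simpa using hij
        · exact absurd ha (by simp)))
    have h2 : cnt L (inr q.2, inl q.1) = 0 := cnt_eq_zero_of_not_mem (by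
      intro hmem
      exact hqS (by
        obtain ⟨i, j, hij, hcase⟩ := bg_adj_cases (hmem_adj _ _ hmem)
        rcases hcase with ⟨ha, hb⟩ | ⟨ha, hb⟩
        · exact absurd ha (by simp)
        · obtain rfl : q.2 = j := by simpa using ha
          obtain rfl : q.1 = i := by simpa using hb
          simpa using hij))
    simp [h1, h2]
  · -- row sums
    intro i
    have hout : outC L (inl i) = ∑ j, cnt L (inl i, inr j) := by
      apply count_grouping_fst _ inr_injective
      intro d hd h1
      obtain ⟨a, b, hab, hcase⟩ := bg_adj_cases (hmem_adj d.1 d.2 (by rwa [Prod.mk.eta]))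
      rcases hcase with ⟨ha, hb⟩ | ⟨ha, hb⟩
      · exact ⟨b, hb⟩
      · rw [h1] at ha; exact absurd ha (by simp)
    have hin : inC L (inl i) = ∑ j, cnt L (inr j, inl i) := by
      apply count_grouping_snd _ inr_injective
      intro d hd h2
      obtain ⟨a, b, hab, hcase⟩ := bg_adj_cases (hmem_adj d.1 d.2 (by rwa [Prod.mk.eta]))
      rcases hcase with ⟨ha, hb⟩ | ⟨ha, hb⟩
      · rw [h2] at hb; exact absurd hb (by simp)
      · exact ⟨b, ha⟩
    have hbal := balance c (inl i)
    rw [← hL] at hbal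
    have heq : outC L (inl i) = inC L (inl i) := by omega
    rw [Finset.sum_sub_distrib]
    rw [← Nat.cast_sum, ← Nat.cast_sum, ← hout, ← hin, heq, sub_self]
  · -- column sums
    intro j
    have hin : inC L (inr j) = ∑ i, cnt L (inl i, inr j) := by
      apply count_grouping_snd _ inl_injective
      intro d hd h2
      obtain ⟨a, b, hab, hcase⟩ := bg_adj_cases (hmem_adj d.1 d.2 (by rwa [Prod.mk.eta]))
      rcases hcase with ⟨ha, hb⟩ | ⟨ha, hb⟩
      · exact ⟨a, ha⟩
      · rw [h2] at hb; exact absurd hb (by simp)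
    have hout : outC L (inr j) = ∑ i, cnt L (inr j, inl i) := by
      apply count_grouping_fst _ inl_injective
      intro d hd h1
      obtain ⟨a, b, hab, hcase⟩ := bg_adj_cases (hmem_adj d.1 d.2 (by rwa [Prod.mk.eta]))
      rcases hcase with ⟨ha, hb⟩ | ⟨ha, hb⟩
      · rw [h1] at ha; exact absurd ha (by simp)
      · exact ⟨a, hb⟩
    have hbal := balance c (inr j)
    rw [← hL] at hbal
    have heq : outC L (inr j) = inC L (inr j) := by omega
    rw [Finset.sum_sub_distrib]
    rw [← Nat.cast_sum, ← Nat.cast_sum, ← hin, ← hout, heq, sub_self]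

lemma circulation_zero (hac : (bipartiteGraph n S).IsAcyclic) (W : Fin n × Fin n → ℝ)
    (hsupp : ∀ q, W q ≠ 0 → q ∈ S) (hd1 : ∀ i, ∑ j, W (i, j) = 0)
    (hd2 : ∀ j, ∑ i, W (i, j) = 0) : W = 0 := by
  classical
  by_contra hW
  obtain ⟨q₀, hq₀⟩ : ∃ q, W q ≠ 0 := by
    by_contra hcon
    push_neg at hcon
    exact hW (funext hcon)
  set G' := bipartiteGraph n {q | W q ≠ 0} with hG'
  have hle : G' ≤ bipartiteGraph n S := by
    intro x y hxy
    obtain ⟨i, j, hij, hcase⟩ := bg_adj_cases hxy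
    have hS : (i, j) ∈ S := hsupp _ hij
    rcases hcase with ⟨rfl, rfl⟩ | ⟨rfl, rfl⟩
    · exact bg_adj.mpr hS
    · exact (bg_adj.mpr hS).symm
  have hac' : G'.IsAcyclic := fun v c hc =>
    hac (c.mapLe hle) ((SimpleGraph.Walk.mapLe_isCycle hle).mpr hc)
  have key : ∀ {x y : Fin n ⊕ Fin n}, G'.Adj x y → ∃ z, G'.Adj x z ∧ z ≠ y := by
    intro x y hxy
    obtain ⟨i, j, hij, hcase⟩ := bg_adj_cases hxy
    rcases hcase with ⟨rfl, rfl⟩ | ⟨rfl, rfl⟩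
    · have hij' : W (i, j) ≠ 0 := hij
      have : ∃ j', W (i, j') ≠ 0 ∧ j' ≠ j := by
        by_contra hcon
        push_neg at hcon
        have hsingle : ∀ j' ∈ Finset.univ, j' ≠ j → W (i, j') = 0 := by
          intro j' _ hne
          by_contra h'
          exact hne (hcon j' h')
        have := Finset.sum_eq_single_of_mem j (Finset.mem_univ j) hsingle
        rw [hd1 i] at this
        exact hij' this.symm
      obtain ⟨j', hj'1, hj'2⟩ := this
      exact ⟨inr j', bg_adj.mpr hj'1, by simp [hj'2]⟩
    · have hij' : W (i, j) ≠ 0 := hij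
      have : ∃ i', W (i', j) ≠ 0 ∧ i' ≠ i := by
        by_contra hcon
        push_neg at hcon
        have hsingle : ∀ i' ∈ Finset.univ, i' ≠ i → W (i', j) = 0 := by
          intro i' _ hne
          by_contra h'
          exact hne (hcon i' h')
        have := Finset.sum_eq_single_of_mem i (Finset.mem_univ i) hsingle
        rw [hd2 j] at this
        exact hij' this.symm
      obtain ⟨i', hi'1, hi'2⟩ := this
      exact ⟨inl i', (bg_adj.mpr hi'1).symm, by simp [hi'2]⟩
  have grow : ∀ k : ℕ, ∃ (x y : Fin n ⊕ Fin n) (p : G'.Walk x y), p.IsPath ∧ p.length = k + 1 := by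
    intro k
    induction k with
    | zero =>
      refine ⟨inl q₀.1, inr q₀.2, SimpleGraph.Walk.cons (bg_adj.mpr hq₀) SimpleGraph.Walk.nil,
        ?_, rfl⟩
      rw [SimpleGraph.Walk.cons_isPath_iff]
      constructor
      · exact SimpleGraph.Walk.IsPath.nil
      · simp
    | succ k ih =>
      obtain ⟨x, y, p, hp, hlen⟩ := ih
      cases p with
      | nil => simp at hlen
      | @cons _ w _ h' p' =>
        obtain ⟨z, hz, hzw⟩ := key h'
        have hzx : z ≠ x := fun h => G'.irrefl (h ▸ hz)
        rcases Classical.em (z ∈ (SimpleGraph.Walk.cons h' p').support) with hmem | hmem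
        · exfalso
          rw [SimpleGraph.Walk.cons_isPath_iff] at hp
          have hzp' : z ∈ p'.support := by
            rw [SimpleGraph.Walk.support_cons] at hmem
            rcases List.mem_cons.mp hmem with h | h
            · exact absurd h hzx
            · exact h
          set t := p'.takeUntil z hzp' with ht_def
          have ht : t.IsPath := hp.1.takeUntil hzp'
          have hxt : x ∉ t.support := fun hx =>
            hp.2 (SimpleGraph.Walk.support_takeUntil_subset _ hzp' hx)
          have ht2 : (SimpleGraph.Walk.cons h' t).IsPath :=
            (SimpleGraph.Walk.cons_isPath_iff _ _).mpr ⟨ht, hxt⟩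
          have hcyc : (SimpleGraph.Walk.cons hz.symm (SimpleGraph.Walk.cons h' t)).IsCycle := by
            rw [SimpleGraph.Walk.cons_isCycle_iff]
            refine ⟨ht2, ?_⟩
            simp only [SimpleGraph.Walk.edges_cons, List.mem_cons]
            rintro (he | he)
            · rw [Sym2.eq_iff] at he
              rcases he with ⟨he1, he2⟩ | ⟨he1, he2⟩
              · exact hzx he1
              · exact hzw he1
            · exact hxt (SimpleGraph.Walk.snd_mem_support_of_mem_edges t he)
          exact hac' _ hcyc
        · refine ⟨z, y, SimpleGraph.Walk.cons hz.symm (SimpleGraph.Walk.cons h' p'),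
            (SimpleGraph.Walk.cons_isPath_iff _ _).mpr ⟨hp, hmem⟩, ?_⟩
          simp only [SimpleGraph.Walk.length_cons] at hlen ⊢
          omega
  obtain ⟨x, y, p, hp, hlen⟩ := grow (Fintype.card (Fin n ⊕ Fin n))
  have := hp.length_lt
  omega

section affine

variable [Fintype ↥S] [DecidablePred (· ∈ S)]

lemma sum_extend (f : ↥S → ℝ) :
    ∑ q : Fin n × Fin n, (if h : q ∈ S then f ⟨q, h⟩ else 0) = ∑ e : ↥S, f e := by
  classical
  calc ∑ q : Fin n × Fin n, (if h : q ∈ S then f ⟨q, h⟩ else 0)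
      = ∑ q ∈ S.toFinset, (if h : q ∈ S then f ⟨q, h⟩ else 0) :=
        (Finset.sum_subset (Finset.subset_univ _) fun q _ hq =>
          dif_neg (by simpa using hq)).symm
    _ = ∑ e : ↥S, (if h : (e : Fin n × Fin n) ∈ S then f ⟨e, h⟩ else 0) :=
        Finset.sum_subtype _ (fun x => Set.mem_toFinset) _
    _ = ∑ e : ↥S, f e := Finset.sum_congr rfl fun e _ => by
        rw [dif_pos e.2]

lemma fst_apply_sum (f : ↥S → ℝ) (i : Fin n) :
    (∑ e : ↥S, f e • prodVertex n ↑e).1 i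
      = ∑ j, (if h : ((i, j) : Fin n × Fin n) ∈ S then f ⟨(i, j), h⟩ else 0) := by
  classical
  have lhs : (∑ e : ↥S, f e • prodVertex n ↑e).1 i
      = ∑ e : ↥S, (if i = (e : Fin n × Fin n).1 then f e else 0) := by
    rw [Prod.fst_sum, Finset.sum_apply]
    refine Finset.sum_congr rfl fun e _ => ?_
    simp [prodVertex, Pi.single_apply, mul_ite]
  rw [lhs, ← sum_extend (S := S) (fun e => if i = (e : Fin n × Fin n).1 then f e else 0)]
  rw [show (fun q : Fin n × Fin n =>
        if h : q ∈ S then (if i = q.1 then f ⟨q, h⟩ else 0) else 0)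
      = fun q : Fin n × Fin n =>
        if i = q.1 then (if h : q ∈ S then f ⟨q, h⟩ else 0) else 0 from funext fun q => by
        by_cases h1 : q ∈ S <;> by_cases h2 : i = q.1 <;> simp [h1, h2]]
  rw [Fintype.sum_prod_type]
  have step : ∀ a : Fin n,
      (∑ b, if i = ((a, b) : Fin n × Fin n).1
        then (if h : ((a, b) : Fin n × Fin n) ∈ S then f ⟨(a, b), h⟩ else 0) else 0)
      = if i = a then (∑ b, if h : ((a, b) : Fin n × Fin n) ∈ S then f ⟨(a, b), h⟩ else 0)
        else 0 := fun a => by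
    by_cases h : i = a <;> simp [h]
  rw [Finset.sum_congr rfl fun a _ => step a, Finset.sum_ite_eq]
  simp

lemma snd_apply_sum (f : ↥S → ℝ) (j : Fin n) :
    (∑ e : ↥S, f e • prodVertex n ↑e).2 j
      = ∑ i, (if h : ((i, j) : Fin n × Fin n) ∈ S then f ⟨(i, j), h⟩ else 0) := by
  classical
  have lhs : (∑ e : ↥S, f e • prodVertex n ↑e).2 j
      = ∑ e : ↥S, (if j = (e : Fin n × Fin n).2 then f e else 0) := by
    rw [Prod.snd_sum, Finset.sum_apply]
    refine Finset.sum_congr rfl fun e _ => ?_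
    simp [prodVertex, Pi.single_apply, mul_ite]
  rw [lhs, ← sum_extend (S := S) (fun e => if j = (e : Fin n × Fin n).2 then f e else 0)]
  rw [show (fun q : Fin n × Fin n =>
        if h : q ∈ S then (if j = q.2 then f ⟨q, h⟩ else 0) else 0)
      = fun q : Fin n × Fin n =>
        if j = q.2 then (if h : q ∈ S then f ⟨q, h⟩ else 0) else 0 from funext fun q => by
        by_cases h1 : q ∈ S <;> by_cases h2 : j = q.2 <;> simp [h1, h2]]
  rw [Fintype.sum_prod_type_right]
  have step : ∀ b : Fin n,
      (∑ a, if j = ((a, b) : Fin n × Fin n).2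
        then (if h : ((a, b) : Fin n × Fin n) ∈ S then f ⟨(a, b), h⟩ else 0) else 0)
      = if j = b then (∑ a, if h : ((a, b) : Fin n × Fin n) ∈ S then f ⟨(a, b), h⟩ else 0)
        else 0 := fun b => by
    by_cases h : j = b <;> simp [h]
  rw [Finset.sum_congr rfl fun b _ => step b, Finset.sum_ite_eq]
  simp

end affine

end AffAux

open AffAux

/-- A set of vertices {(e_i, e_j) : (i,j) ∈ S} of Δ_{n−1} × Δ_{n−1} is affinely
independent iff the corresponding bipartite graph is acyclic (a forest). -/
theorem affineIndependent_iff_acyclic (n : ℕ) (S : Set (Fin n × Fin n)) :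
    AffineIndependent ℝ (fun q : S => prodVertex n q) ↔
      (bipartiteGraph n S).IsAcyclic := by
  classical
  constructor
  · intro hA
    by_contra hcyc
    obtain ⟨W, hW0, hsupp, hd1, hd2⟩ := exists_circulation hcyc
    set f : ↥S → ℝ := fun e => W e with hf
    have hFW : ∀ q : Fin n × Fin n, (if h : q ∈ S then f ⟨q, h⟩ else 0) = W q := by
      intro q
      by_cases h : q ∈ S
      · rw [dif_pos h]
      · rw [dif_neg h]
        by_contra hne
        exact h (hsupp q fun h0 => hne h0.symm)
    have hsum : ∑ e : ↥S, f e = 0 := by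
      rw [← sum_extend (S := S) f, Finset.sum_congr rfl fun q _ => hFW q,
        Fintype.sum_prod_type]
      simp [hd1]
    have hvec : ∑ e : ↥S, f e • prodVertex n ↑e = 0 := by
      have h1 : (∑ e : ↥S, f e • prodVertex n ↑e).1 = 0 := by
        funext i
        rw [fst_apply_sum, Finset.sum_congr rfl fun j _ => hFW (i, j)]
        simpa using hd1 i
      have h2 : (∑ e : ↥S, f e • prodVertex n ↑e).2 = 0 := by
        funext j
        rw [snd_apply_sum, Finset.sum_congr rfl fun i _ => hFW (i, j)]
        simpa using hd2 j
      exact Prod.ext h1 h2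
    have hall := affineIndependent_iff.mp hA Finset.univ f hsum hvec
    apply hW0
    funext q
    simp only [Pi.zero_apply]
    by_cases h : q ∈ S
    · exact hall ⟨q, h⟩ (Finset.mem_univ _)
    · by_contra hne
      exact h (hsupp q hne)
  · intro hac
    rw [affineIndependent_iff]
    intro s w hw0 hwv e he
    set f : ↥S → ℝ := fun e => if e ∈ s then w e else 0 with hf
    set W : Fin n × Fin n → ℝ := fun q => if h : q ∈ S then f ⟨q, h⟩ else 0 with hW
    have hvec : ∑ e : ↥S, f e • prodVertex n ↑e = ∑ e ∈ s, w e • prodVertex n ↑e := by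
      rw [Finset.sum_congr rfl (fun e (_ : e ∈ Finset.univ) =>
        show f e • prodVertex n ↑e = if e ∈ s then w e • prodVertex n ↑e else 0 from by
          by_cases h : e ∈ s <;> simp [hf, h])]
      rw [Finset.sum_ite_mem, Finset.univ_inter]
    have hsupp : ∀ q, W q ≠ 0 → q ∈ S := by
      intro q hq
      by_contra h
      exact hq (by simp [hW, h])
    have hd1 : ∀ i, ∑ j, W (i, j) = 0 := by
      intro i
      simp only [hW]
      rw [← fst_apply_sum (S := S) f i, hvec, hwv]
      simp
    have hd2 : ∀ j, ∑ i, W (i, j) = 0 := by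
      intro j
      simp only [hW]
      rw [← snd_apply_sum (S := S) f j, hvec, hwv]
      simp
    have hzero := circulation_zero hac W hsupp hd1 hd2
    have hWe : W ↑e = 0 := by rw [hzero]; rfl
    rw [hW] at hWe
    simp only [dif_pos e.2, Subtype.coe_eta, hf] at hWe
    rwa [if_pos he] at hWe
end

section
/- Let μ = (1/2, 1/7, 5/14) and let f(p) be the total variation distance between μ and the Hardy-Weinberg point (p², 2p(1−p), (1−p)²). Then f(p) ≥ √2 − 8/7 for all p ∈ [0,1]. -/
open BigOperators

/-- For μ = (1/2, 1/7, 5/14), the total variation distance to the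
Hardy–Weinberg point (p², 2p(1−p), (1−p)²) is at least √2 − 8/7 for all
p ∈ [0,1]. -/
theorem tv_hardyWeinberg_lower_bound (p : ℝ) (hp : p ∈ Set.Icc (0 : ℝ) 1) :
    Real.sqrt 2 - 8 / 7 ≤
      (1 / 2) * (|1 / 2 - p ^ 2| + |1 / 7 - 2 * p * (1 - p)|
        + |5 / 14 - (1 - p) ^ 2|) := by
  obtain ⟨hp0, hp1⟩ := hp
  have hs : Real.sqrt 2 ^ 2 = 2 := Real.sq_sqrt (by norm_num)
  have hs1 : (1 : ℝ) ≤ Real.sqrt 2 := by nlinarith [Real.sqrt_nonneg 2]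
  have hA1 : 1 / 2 - p ^ 2 ≤ |1 / 2 - p ^ 2| := le_abs_self _
  have hA2 : -(1 / 2 - p ^ 2) ≤ |1 / 2 - p ^ 2| := neg_le_abs _
  have hB1 : 1 / 7 - 2 * p * (1 - p) ≤ |1 / 7 - 2 * p * (1 - p)| := le_abs_self _
  have hB2 : -(1 / 7 - 2 * p * (1 - p)) ≤ |1 / 7 - 2 * p * (1 - p)| := neg_le_abs _
  have hC1 : 5 / 14 - (1 - p) ^ 2 ≤ |5 / 14 - (1 - p) ^ 2| := le_abs_self _
  have hC2 : -(5 / 14 - (1 - p) ^ 2) ≤ |5 / 14 - (1 - p) ^ 2| := neg_le_abs _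
  rcases le_or_gt p (1 - Real.sqrt 2 / 2) with h | h
  · -- 2f ≥ a - b - c = 2a = 1 - 2p² ≥ 2√2 - 2
    nlinarith [sq_nonneg (p - (1 - Real.sqrt 2 / 2)), mul_nonneg hp0 hp0]
  · rcases le_or_gt p (Real.sqrt 2 / 2) with h' | h'
    · -- 2f ≥ a - b + c = -2b = 2(2p - 2p² - 1/7)
      nlinarith [mul_nonneg (sub_nonneg.2 h') (le_of_lt (sub_pos.2 h))]
    · -- 2f ≥ -a - b + c = 2c ≥ 2(√2 - 8/7)
      nlinarith [sq_nonneg (p - Real.sqrt 2 / 2), mul_nonneg (sub_nonneg.2 hp1) (le_of_lt (sub_pos.2 h))]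
end
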